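/- Let n ≥ 2 and let τ_1, …, τ_{n-1} be transpositions of {1, …, n}. The left-to-right product τ_1 τ_2 ⋯ τ_{n-1} is an n-cycle (i.e., a cyclic permutation acting transitively on all of {1, …, n}) if and only if the simple graph on vertex set {1, …, n}, in which distinct i and j are adjacent precisely when some τ_k exchanges i and j, is connected. -/

import Mathlib

open Equiv Equiv.Perm SimpleGraph Finset

section Aux

variable {α : Type*} [DecidableEq α] [Fintype α]

set_option linter.unusedSectionVars false

/-- The relation obtained from `r` by merging the classes of `a` and `b`. -/
def MRel (r : α → α → Prop) (a b x y : α) : Prop :=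
  r x y ∨ (r x a ∧ r y b) ∨ (r x b ∧ r y a)

lemma MRel.equiv {r : α → α → Prop} (hr : Equivalence r) (a b : α) :
    Equivalence (MRel r a b) := by
  constructor
  · exact fun x => Or.inl (hr.refl x)
  · rintro x y (h | ⟨h1, h2⟩ | ⟨h1, h2⟩)
    · exact Or.inl (hr.symm h)
    · exact Or.inr (Or.inr ⟨h2, h1⟩)
    · exact Or.inr (Or.inl ⟨h2, h1⟩)
  · rintro x y z (h | ⟨h1, h2⟩ | ⟨h1, h2⟩) (g | ⟨g1, g2⟩ | ⟨g1, g2⟩)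
    · exact Or.inl (hr.trans h g)
    · exact Or.inr (Or.inl ⟨hr.trans h g1, g2⟩)
    · exact Or.inr (Or.inr ⟨hr.trans h g1, g2⟩)
    · exact Or.inr (Or.inl ⟨h1, hr.trans (hr.symm g) h2⟩)
    · exact Or.inr (Or.inl ⟨h1, g2⟩)
    · exact Or.inl (hr.trans h1 (hr.symm g2))
    · exact Or.inr (Or.inr ⟨h1, hr.trans (hr.symm g) h2⟩)
    · exact Or.inl (hr.trans h1 (hr.symm g2))
    · exact Or.inr (Or.inr ⟨h1, g2⟩)

lemma sameCycle_equiv (f : Perm α) : Equivalence f.SameCycle :=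
  ⟨SameCycle.refl f, SameCycle.symm, SameCycle.trans⟩

lemma sc_of_pow {f : Perm α} {x y : α} {i : ℕ} (h : (f ^ i) x = y) : f.SameCycle x y :=
  ⟨(i : ℤ), by simpa [zpow_natCast] using h⟩

/-- a swap moving `x` to `y ≠ x` is `swap x y`. -/
lemma isSwap_apply_eq {q : Perm α} (hq : q.IsSwap) {x y : α} (hxy : x ≠ y) (h : q x = y) :
    q = Equiv.swap x y := by
  obtain ⟨c, d, hcd, rfl⟩ := hq
  rw [Equiv.swap_apply_def] at h
  split_ifs at h with h1 h2
  · subst h1; subst h; rfl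
  · subst h2; subst h; exact Equiv.swap_comm _ _
  · exact absurd h hxy

lemma pow_succ_apply (f : Perm α) (j : ℕ) (x : α) :
    (f ^ (j + 1)) x = f ((f ^ j) x) := by
  rw [pow_succ', Equiv.Perm.mul_apply]

lemma pow_succ_apply' (f : Perm α) (j : ℕ) (x : α) :
    (f ^ (j + 1)) x = (f ^ j) (f x) := by
  rw [pow_succ, Equiv.Perm.mul_apply]

/-- Step lemma: any point is `MRel`-related to its image under `swap a b * σ`. -/
lemma mrel_step (σ : Perm α) (a b x : α) :
    MRel σ.SameCycle a b x ((Equiv.swap a b * σ) x) := by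
  have hx : σ.SameCycle x (σ x) := ⟨1, by simp⟩
  have hval : (Equiv.swap a b * σ) x = Equiv.swap a b (σ x) := rfl
  rcases eq_or_ne (σ x) a with h | h
  · rw [hval, h, Equiv.swap_apply_left]
    exact Or.inr (Or.inl ⟨h ▸ hx, SameCycle.refl _ _⟩)
  · rcases eq_or_ne (σ x) b with h' | h'
    · rw [hval, h', Equiv.swap_apply_right]
      exact Or.inr (Or.inr ⟨h' ▸ hx, SameCycle.refl _ _⟩)
    · rw [hval, Equiv.swap_apply_of_ne_of_ne h h']
      exact Or.inl hx

lemma sameCycle_swapMul_imp (σ : Perm α) (a b x y : α)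
    (h : (Equiv.swap a b * σ).SameCycle x y) : MRel σ.SameCycle a b x y := by
  obtain ⟨i, _, rfl⟩ := h.exists_pow_eq'
  clear * -
  induction i generalizing x with
  | zero => exact Or.inl (SameCycle.refl _ _)
  | succ i ih =>
    rw [pow_succ_apply']
    exact (MRel.equiv (sameCycle_equiv σ) a b).trans (mrel_step σ a b x)
      (ih ((Equiv.swap a b * σ) x))

lemma sameCycle_swapMul_ab (σ : Perm α) {a b : α} (h : ¬ σ.SameCycle a b) :
    (Equiv.swap a b * σ).SameCycle a b := by
  set f := Equiv.swap a b * σ with hf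
  have hfapp : ∀ x, f x = Equiv.swap a b (σ x) := fun x => rfl
  have key : ∀ j : ℕ, (f ^ j) b = (σ ^ j) b ∨ f.SameCycle b a := by
    intro j
    induction j with
    | zero => exact Or.inl rfl
    | succ j ih =>
      rcases ih with ih | ih
      · have hval : (f ^ (j + 1)) b = Equiv.swap a b ((σ ^ (j + 1)) b) := by
          rw [pow_succ_apply, ih, hfapp, ← pow_succ_apply]
        have hna : (σ ^ (j + 1)) b ≠ a := fun hc => h ((sc_of_pow hc).symm)
        rcases eq_or_ne ((σ ^ (j + 1)) b) b with hb | hb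
        · right
          exact (sc_of_pow (i := j + 1) (by rw [hval, hb, Equiv.swap_apply_right]))
        · left
          rw [hval, Equiv.swap_apply_of_ne_of_ne hna hb]
      · exact Or.inr ih
  have hord : 0 < orderOf σ := orderOf_pos σ
  have h1 : orderOf σ - 1 + 1 = orderOf σ := by omega
  rcases key (orderOf σ - 1) with hj | hj
  · refine (sc_of_pow (i := orderOf σ) ?_).symm
    calc (f ^ orderOf σ) b = f ((f ^ (orderOf σ - 1)) b) := by
          conv_lhs => rw [← h1, pow_succ_apply]
      _ = Equiv.swap a b (σ ((σ ^ (orderOf σ - 1)) b)) := by rw [hj, hfapp]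
      _ = Equiv.swap a b ((σ ^ orderOf σ) b) := by rw [← pow_succ_apply, h1]
      _ = a := by rw [pow_orderOf_eq_one]; simp
  · exact hj.symm

lemma sameCycle_swapMul_iff {σ : Perm α} {a b : α} (h : ¬ σ.SameCycle a b) (x y : α) :
    (Equiv.swap a b * σ).SameCycle x y ↔ MRel σ.SameCycle a b x y := by
  set f := Equiv.swap a b * σ with hf
  have hback : Equiv.swap a b * f = σ := by
    rw [hf, ← mul_assoc, Equiv.swap_mul_self, one_mul]
  have hfab : f.SameCycle a b := sameCycle_swapMul_ab σ h
  have key : ∀ u v : α, σ.SameCycle u v → f.SameCycle u v := by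
    intro u v huv
    have := sameCycle_swapMul_imp f a b u v (by rwa [hback])
    rcases this with h' | ⟨h1, h2⟩ | ⟨h1, h2⟩
    · exact h'
    · exact (h1.trans hfab).trans h2.symm
    · exact (h1.trans hfab.symm).trans h2.symm
  constructor
  · exact sameCycle_swapMul_imp σ a b x y
  · rintro (h' | ⟨h1, h2⟩ | ⟨h1, h2⟩)
    · exact key _ _ h'
    · exact ((key _ _ h1).trans hfab).trans (key _ _ h2).symm
    · exact ((key _ _ h1).trans hfab.symm).trans (key _ _ h2).symm

/-! ### Graphs from lists of permutations -/

/-- The graph whose edges are the pairs exchanged by members of `l`. -/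
def GrL (l : List (Perm α)) : SimpleGraph α :=
  SimpleGraph.fromRel (fun x y => ∃ p ∈ l, p x = y)

lemma GrL_mono {l m : List (Perm α)} (h : ∀ p ∈ l, p ∈ m) : GrL l ≤ GrL m := by
  intro x y hxy
  rw [GrL, SimpleGraph.fromRel_adj] at hxy ⊢
  exact ⟨hxy.1, hxy.2.imp (fun ⟨p, hp, hh⟩ => ⟨p, h p hp, hh⟩)
    (fun ⟨p, hp, hh⟩ => ⟨p, h p hp, hh⟩)⟩

lemma GrL_congr {l m : List (Perm α)} (h : ∀ p, p ∈ l ↔ p ∈ m) : GrL l = GrL m :=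
  le_antisymm (GrL_mono fun p hp => (h p).1 hp) (GrL_mono fun p hp => (h p).2 hp)

lemma reachable_equiv (G : SimpleGraph α) : Equivalence G.Reachable :=
  ⟨Reachable.refl, Reachable.symm, Reachable.trans⟩

lemma reachable_prod (l : List (Perm α)) (x : α) : (GrL l).Reachable x (l.prod x) := by
  induction l generalizing x with
  | nil =>
    simp only [List.prod_nil, Equiv.Perm.one_apply]
    exact Reachable.refl x
  | cons p t ih =>
    rw [List.prod_cons, Equiv.Perm.mul_apply]
    have h1 : (GrL (p :: t)).Reachable x (t.prod x) :=
      (ih x).mono (GrL_mono (fun q hq => List.mem_cons_of_mem p hq))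
    refine h1.trans ?_
    rcases eq_or_ne (p (t.prod x)) (t.prod x) with h | h
    · rw [h]
    · exact (SimpleGraph.Adj.reachable
        ((SimpleGraph.fromRel_adj _ _ _).2 ⟨Ne.symm h,
          Or.inl ⟨p, List.mem_cons_self, rfl⟩⟩))

lemma reachable_prod_pow (l : List (Perm α)) (x : α) (k : ℕ) :
    (GrL l).Reachable x ((l.prod ^ k) x) := by
  induction k generalizing x with
  | zero =>
    simp only [pow_zero, Equiv.Perm.one_apply]
    exact Reachable.refl x
  | succ k ih =>
    rw [pow_succ_apply']
    exact (reachable_prod l x).trans (ih (l.prod x))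

lemma reachable_of_sameCycle {l : List (Perm α)} {x y : α} (h : l.prod.SameCycle x y) :
    (GrL l).Reachable x y := by
  obtain ⟨i, _, rfl⟩ := h.exists_pow_eq'
  exact reachable_prod_pow l x i

/-- Adding one more swap to the list merges reachability classes. -/
lemma reachable_append_iff (s : List (Perm α)) {a b : α} (hab : a ≠ b) (x y : α) :
    (GrL (s ++ [Equiv.swap a b])).Reachable x y ↔
      MRel (GrL s).Reachable a b x y := by
  constructor
  · intro h
    obtain ⟨w⟩ := h
    induction w with
    | nil => exact Or.inl (Reachable.refl _)
    | @cons u v z hadj w ih =>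
      refine (MRel.equiv (reachable_equiv (GrL s)) a b).trans ?_ ih
      rw [GrL, SimpleGraph.fromRel_adj] at hadj
      obtain ⟨hne, hor⟩ := hadj
      have hcase : (∃ p ∈ s, p u = v ∨ p v = u) ∨
          Equiv.swap a b u = v ∨ Equiv.swap a b v = u := by
        rcases hor with ⟨p, hp, hpv⟩ | ⟨p, hp, hpv⟩ <;>
          rcases List.mem_append.1 hp with hp | hp
        · exact Or.inl ⟨p, hp, Or.inl hpv⟩
        · exact Or.inr (Or.inl ((List.mem_singleton.1 hp) ▸ hpv))
        · exact Or.inl ⟨p, hp, Or.inr hpv⟩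
        · exact Or.inr (Or.inr ((List.mem_singleton.1 hp) ▸ hpv))
      rcases hcase with ⟨p, hp, hpv⟩ | hsw
      · refine Or.inl (SimpleGraph.Adj.reachable ?_)
        rw [GrL, SimpleGraph.fromRel_adj]
        exact ⟨hne, hpv.imp (fun h' => ⟨p, hp, h'⟩) (fun h' => ⟨p, hp, h'⟩)⟩
      · have huv : Equiv.swap a b u = v ∨ Equiv.swap a b v = u → (u = a ∧ v = b) ∨ (u = b ∧ v = a) := by
          rintro (h' | h')
          · rw [Equiv.swap_apply_def] at h'
            split_ifs at h' with h1 h2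
            · exact Or.inl ⟨h1, h'.symm⟩
            · exact Or.inr ⟨h2, h'.symm⟩
            · exact absurd h' hne
          · rw [Equiv.swap_apply_def] at h'
            split_ifs at h' with h1 h2
            · exact Or.inr ⟨h'.symm, h1⟩
            · exact Or.inl ⟨h'.symm, h2⟩
            · exact absurd h' hne.symm
        rcases huv hsw with ⟨rfl, rfl⟩ | ⟨rfl, rfl⟩
        · exact Or.inr (Or.inl ⟨Reachable.refl _, Reachable.refl _⟩)
        · exact Or.inr (Or.inr ⟨Reachable.refl _, Reachable.refl _⟩)
  · have hmono : GrL s ≤ GrL (s ++ [Equiv.swap a b]) :=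
      GrL_mono fun p hp => List.mem_append.2 (Or.inl hp)
    have hadj : (GrL (s ++ [Equiv.swap a b])).Reachable a b := by
      refine SimpleGraph.Adj.reachable ?_
      rw [GrL, SimpleGraph.fromRel_adj]
      exact ⟨hab, Or.inl ⟨Equiv.swap a b, List.mem_append.2 (Or.inr (List.mem_singleton.2 rfl)),
        Equiv.swap_apply_left a b⟩⟩
    rintro (h' | ⟨h1, h2⟩ | ⟨h1, h2⟩)
    · exact h'.mono hmono
    · exact ((h1.mono hmono).trans hadj).trans (h2.mono hmono).symm
    · exact ((h1.mono hmono).trans hadj.symm).trans (h2.mono hmono).symm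

/-! ### Counting equivalence classes -/

open scoped Classical in
/-- The class of `x` under the relation `r`. -/
noncomputable def classOf (r : α → α → Prop) (x : α) : Finset α :=
  Finset.univ.filter fun y => r x y

lemma mem_classOf {r : α → α → Prop} {x y : α} : y ∈ classOf r x ↔ r x y := by
  unfold classOf
  simp

/-- The number of classes of a relation. -/
noncomputable def numClasses (r : α → α → Prop) : ℕ :=
  (Finset.univ.image (classOf r)).card

lemma classOf_eq_iff {r : α → α → Prop} (hr : Equivalence r) {x y : α} :
    classOf r x = classOf r y ↔ r x y := by
  constructor
  · intro h
    have hy : y ∈ classOf r y := mem_classOf.2 (hr.refl y)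
    rw [← h] at hy
    exact mem_classOf.1 hy
  · intro h
    ext z
    rw [mem_classOf, mem_classOf]
    exact ⟨fun h' => hr.trans (hr.symm h) h', fun h' => hr.trans h h'⟩

lemma numClasses_congr {r r' : α → α → Prop} (h : ∀ x y, r x y ↔ r' x y) :
    numClasses r = numClasses r' := by
  have : r = r' := by
    funext x y
    exact propext (h x y)
  rw [this]

lemma numClasses_eq_one {r : α → α → Prop} [Nonempty α] (h : ∀ x y, r x y) :
    numClasses r = 1 := by
  unfold numClasses
  have : classOf r = fun _ => Finset.univ := by
    funext x
    ext y
    simp [mem_classOf, h x y]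
  rw [this, Finset.image_const Finset.univ_nonempty]
  simp

lemma numClasses_merge_le [LinearOrder α] {r : α → α → Prop} (hr : Equivalence r) (a b : α) :
    numClasses r ≤ numClasses (MRel r a b) + 1 := by
  classical
  set c : α → Finset α := classOf r with hc
  set c' : α → Finset α := classOf (MRel r a b) with hc'
  set S : Finset (Finset α) := Finset.univ.image c with hS
  have hsub : S ⊆ insert (c a) (S.erase (c a)) := by
    intro C hC
    rcases eq_or_ne C (c a) with rfl | h
    · exact Finset.mem_insert_self _ _
    · exact Finset.mem_insert_of_mem (Finset.mem_erase.2 ⟨h, hC⟩)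
  have hcard : S.card ≤ (S.erase (c a)).card + 1 :=
    le_trans (Finset.card_le_card hsub) (Finset.card_insert_le _ _)
  set F : Finset α → Finset α := fun C =>
    if h : C.Nonempty then c' (C.min' h) else Finset.univ with hF
  have hmem : ∀ x : α, x ∈ c x := fun x => mem_classOf.2 (hr.refl x)
  have hinj : Set.InjOn F (S.erase (c a)) := by
    intro C hC D hD hFCD
    obtain ⟨hCne, hCS⟩ := Finset.mem_erase.1 hC
    obtain ⟨hDne, hDS⟩ := Finset.mem_erase.1 hD
    obtain ⟨u, _, rfl⟩ := Finset.mem_image.1 hCS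
    obtain ⟨v, _, rfl⟩ := Finset.mem_image.1 hDS
    have hCnon : (c u).Nonempty := ⟨u, hmem u⟩
    have hDnon : (c v).Nonempty := ⟨v, hmem v⟩
    rw [hF] at hFCD
    simp only [dif_pos hCnon, dif_pos hDnon] at hFCD
    set ru := (c u).min' hCnon with hru
    set rv := (c v).min' hDnon with hrv
    have hru_r : r u ru := mem_classOf.1 (Finset.min'_mem _ _)
    have hrv_r : r v rv := mem_classOf.1 (Finset.min'_mem _ _)
    have : MRel r a b ru rv := (classOf_eq_iff (MRel.equiv hr a b)).1 hFCD
    rcases this with h' | ⟨h1, _⟩ | ⟨_, h2⟩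
    · exact (classOf_eq_iff hr).2 (hr.trans hru_r (hr.trans h' (hr.symm hrv_r)))
    · exact absurd ((classOf_eq_iff hr).2 (hr.trans hru_r h1)) hCne
    · exact absurd ((classOf_eq_iff hr).2 (hr.trans hrv_r h2)) hDne
  have hmaps : ∀ C ∈ S.erase (c a), F C ∈ Finset.univ.image c' := by
    intro C hC
    obtain ⟨_, hCS⟩ := Finset.mem_erase.1 hC
    obtain ⟨u, _, rfl⟩ := Finset.mem_image.1 hCS
    have hCnon : (c u).Nonempty := ⟨u, hmem u⟩
    rw [hF]
    simp only [dif_pos hCnon]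
    exact Finset.mem_image.2 ⟨(c u).min' hCnon, Finset.mem_univ _, rfl⟩
  have : (S.erase (c a)).card ≤ (Finset.univ.image c').card :=
    Finset.card_le_card_of_injOn F hmaps hinj
  calc numClasses r = S.card := rfl
    _ ≤ (S.erase (c a)).card + 1 := hcard
    _ ≤ (Finset.univ.image c').card + 1 := by omega
    _ = numClasses (MRel r a b) + 1 := rfl

lemma mrel_of_rel {r : α → α → Prop} (hr : Equivalence r) {a b : α} (hab : r a b) (x y : α) :
    MRel r a b x y ↔ r x y := by
  constructor
  · rintro (h | ⟨h1, h2⟩ | ⟨h1, h2⟩)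
    · exact h
    · exact hr.trans h1 (hr.trans hab (hr.symm h2))
    · exact hr.trans h1 (hr.trans (hr.symm hab) (hr.symm h2))
  · exact Or.inl

lemma numClasses_id : numClasses (fun x y : α => x = y) = Fintype.card α := by
  unfold numClasses
  have : classOf (fun x y : α => x = y) = fun x => ({x} : Finset α) := by
    funext x
    ext y
    rw [mem_classOf]
    simp [eq_comm]
  rw [this, Finset.card_image_of_injective _ (fun x y h => by simpa using h)]
  simp

/-! ### The chain lemmas -/

lemma chain_card_le [LinearOrder α] :
    ∀ t : List (Perm α), (∀ p ∈ t, p.IsSwap) →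
      Fintype.card α ≤ numClasses (GrL t).Reachable + t.length := by
  intro t
  induction t using List.reverseRecOn with
  | nil =>
    intro _
    have h1 : numClasses (GrL ([] : List (Perm α))).Reachable
        = numClasses (fun x y : α => x = y) := by
      refine numClasses_congr fun x y => ?_
      constructor
      · intro h
        have : GrL ([] : List (Perm α)) = ⊥ := by
          apply le_antisymm _ bot_le
          intro u v huv
          rw [GrL, SimpleGraph.fromRel_adj] at huv
          rcases huv.2 with ⟨p, hp, _⟩ | ⟨p, hp, _⟩ <;> simp at hp
        rw [this] at h
        exact SimpleGraph.reachable_bot.mp h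
      · rintro rfl; exact Reachable.refl _
    rw [h1, numClasses_id]
    simp
  | append_singleton s p ih =>
    intro hsw
    have hs : ∀ q ∈ s, q.IsSwap := fun q hq => hsw q (List.mem_append.2 (Or.inl hq))
    obtain ⟨a, b, hab, rfl⟩ := hsw p (List.mem_append.2 (Or.inr (List.mem_singleton.2 rfl)))
    have hcongr : numClasses (GrL (s ++ [Equiv.swap a b])).Reachable
        = numClasses (MRel (GrL s).Reachable a b) :=
      numClasses_congr (reachable_append_iff s hab)
    have hm := numClasses_merge_le (reachable_equiv (GrL s)) a b
    have := ih hs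
    rw [hcongr]
    simp only [List.length_append, List.length_singleton]
    omega

lemma chain_sc_eq_reach [LinearOrder α] :
    ∀ t : List (Perm α), (∀ p ∈ t, p.IsSwap) →
      numClasses (GrL t).Reachable + t.length = Fintype.card α →
      ∀ x y, (t.reverse.prod).SameCycle x y ↔ (GrL t).Reachable x y := by
  intro t
  induction t using List.reverseRecOn with
  | nil =>
    intro _ _ x y
    simp only [List.reverse_nil, List.prod_nil]
    constructor
    · intro h
      obtain ⟨i, hi⟩ := h
      simp only [one_zpow, Equiv.Perm.one_apply] at hi
      exact hi ▸ Reachable.refl _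
    · intro h
      have : GrL ([] : List (Perm α)) = ⊥ := by
        apply le_antisymm _ bot_le
        intro u v huv
        rw [GrL, SimpleGraph.fromRel_adj] at huv
        rcases huv.2 with ⟨p, hp, _⟩ | ⟨p, hp, _⟩ <;> simp at hp
      rw [this] at h
      exact SimpleGraph.reachable_bot.mp h ▸ SameCycle.refl _ _
  | append_singleton s p ih =>
    intro hsw hcount x y
    have hs : ∀ q ∈ s, q.IsSwap := fun q hq => hsw q (List.mem_append.2 (Or.inl hq))
    obtain ⟨a, b, hab, rfl⟩ := hsw p (List.mem_append.2 (Or.inr (List.mem_singleton.2 rfl)))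
    have hcongr : numClasses (GrL (s ++ [Equiv.swap a b])).Reachable
        = numClasses (MRel (GrL s).Reachable a b) :=
      numClasses_congr (reachable_append_iff s hab)
    have hI1 := chain_card_le s hs
    have hm := numClasses_merge_le (reachable_equiv (GrL s)) a b
    rw [hcongr] at hcount
    simp only [List.length_append, List.length_singleton] at hcount
    -- show the new edge joins two distinct components
    have hnr : ¬ (GrL s).Reachable a b := by
      intro hr
      have : numClasses (MRel (GrL s).Reachable a b) = numClasses (GrL s).Reachable :=
        numClasses_congr (mrel_of_rel (reachable_equiv (GrL s)) hr)
      omega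
    have hseq : numClasses (GrL s).Reachable + s.length = Fintype.card α := by omega
    have hih := ih hs hseq
    have hnsc : ¬ (s.reverse.prod).SameCycle a b := fun hsc => hnr ((hih a b).1 hsc)
    have hprod : (s ++ [Equiv.swap a b]).reverse.prod
        = Equiv.swap a b * s.reverse.prod := by
      rw [List.reverse_append]
      simp
    rw [hprod, sameCycle_swapMul_iff hnsc, reachable_append_iff s hab]
    unfold MRel
    rw [hih x y, hih x a, hih y b, hih x b, hih y a]

end Aux

/-- for transpositions `τ₁, …, τ_{n-1}` of `{1,…,n}` (modelled as
`Fin n`), the left-to-right product `τ₁ τ₂ ⋯ τ_{n-1}` (apply `τ₁` first, so it is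
`(List.ofFn τ).reverse.prod`) is an `n`-cycle (a cyclic permutation acting
transitively on all of `{1,…,n}`, i.e. a cycle with full support) if and only if
the simple graph on `{1,…,n}` in which distinct `i`, `j` are adjacent precisely when
some `τ_k` exchanges them is connected. -/
theorem product_is_cycle_iff_graph_connected (n : ℕ) (hn : 2 ≤ n)
    (τ : Fin (n - 1) → Equiv.Perm (Fin n)) (hτ : ∀ k, (τ k).IsSwap) :
    ((List.ofFn τ).reverse.prod.IsCycle ∧
        (List.ofFn τ).reverse.prod.support = Finset.univ) ↔
      (SimpleGraph.fromRel fun i j : Fin n => ∃ k, τ k i = j).Connected := by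
  have hne : Nonempty (Fin n) := ⟨⟨0, by omega⟩⟩
  set L : List (Equiv.Perm (Fin n)) := List.ofFn τ with hL
  have hGrL : (SimpleGraph.fromRel fun i j : Fin n => ∃ k, τ k i = j) = GrL L := by
    unfold GrL
    congr 1
    funext x y
    apply propext
    constructor
    · rintro ⟨k, hk⟩
      exact ⟨τ k, by simp [hL, List.mem_ofFn], hk⟩
    · rintro ⟨p, hp, hpx⟩
      rw [hL, List.mem_ofFn] at hp
      obtain ⟨k, rfl⟩ := hp
      exact ⟨k, hpx⟩
  have hGrLrev : GrL L.reverse = GrL L :=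
    GrL_congr fun p => List.mem_reverse
  have hswaps : ∀ p ∈ L, p.IsSwap := by
    intro p hp
    rw [hL, List.mem_ofFn] at hp
    obtain ⟨k, rfl⟩ := hp
    exact hτ k
  constructor
  · rintro ⟨hcyc, hsupp⟩
    rw [hGrL]
    refine ⟨?_⟩
    intro x y
    rcases eq_or_ne x y with rfl | hxy
    · exact Reachable.refl _
    obtain ⟨z, hz, hall⟩ := hcyc
    have hx : L.reverse.prod x ≠ x := by
      have : x ∈ (L.reverse.prod).support := hsupp ▸ Finset.mem_univ x
      exact Equiv.Perm.mem_support.1 this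
    have hy : L.reverse.prod y ≠ y := by
      have : y ∈ (L.reverse.prod).support := hsupp ▸ Finset.mem_univ y
      exact Equiv.Perm.mem_support.1 this
    have hsc : (L.reverse.prod).SameCycle x y := ((hall hx).symm.trans (hall hy))
    have := reachable_of_sameCycle (l := L.reverse) hsc
    rwa [hGrLrev] at this
  · intro hconn
    rw [hGrL] at hconn
    have h1 : numClasses (GrL L).Reachable = 1 :=
      numClasses_eq_one fun x y => hconn.preconnected x y
    have hlen : L.length = n - 1 := by simp [hL]
    have hcount : numClasses (GrL L).Reachable + L.length = Fintype.card (Fin n) := by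
      rw [h1, hlen, Fintype.card_fin]
      omega
    have hiff := chain_sc_eq_reach L hswaps hcount
    have hallsc : ∀ x y : Fin n, (L.reverse.prod).SameCycle x y := by
      intro x y
      exact (hiff x y).2 (hconn.preconnected x y)
    have hmove : ∀ y : Fin n, L.reverse.prod y ≠ y := by
      intro y hy
      have : Nontrivial (Fin n) :=
        ⟨⟨⟨0, by omega⟩, ⟨1, by omega⟩, by simp [Fin.ext_iff]⟩⟩
      obtain ⟨z, hzy⟩ := exists_ne y
      obtain ⟨i, hi⟩ := hallsc y z
      rw [Equiv.Perm.zpow_apply_eq_self_of_apply_eq_self hy i] at hi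
      exact hzy hi.symm
    constructor
    · exact ⟨⟨0, by omega⟩, hmove _, fun y _ => hallsc _ y⟩
    · ext y
      simp [Equiv.Perm.mem_support, hmove y]
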